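/- Let a, c ≥ 1 be integers, α ∈ {1, −1}, μ ∈ ℤ, and d an integer with d ≡ μ² (mod 4a²c²). Let p, q ∈ ℤ satisfy p² − d·q² = 4αac. Then 2a²c² divides (2ac + α·d·q²) − μ·(α·p·q) if and only if 2ac divides p − μq. -/
import Mathlib


/-- equivalence (3.1.41) ⇔ (3.1.46) in the proof of Theorem 3.1.4.
Let `a, c ≥ 1`, `α = ±1`, `μ ∈ ℤ`, and `d ≡ μ² (mod 4a²c²)`.  If `p² − dq² = 4αac`,
then `2a²c² ∣ (2ac + αdq²) − μ·αpq` if and only if `2ac ∣ p − μq`. -/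
theorem a_series_congruence_iff
    (a c : ℤ) (ha : 1 ≤ a) (hc : 1 ≤ c)
    (α : ℤ) (hα : α = 1 ∨ α = -1)
    (μ d : ℤ) (hdμ : (4 * a ^ 2 * c ^ 2) ∣ (d - μ ^ 2))
    (p q : ℤ) (hpq : p ^ 2 - d * q ^ 2 = 4 * α * a * c) :
    (2 * a ^ 2 * c ^ 2) ∣ ((2 * a * c + α * d * q ^ 2) - μ * (α * p * q)) ↔
      (2 * a * c) ∣ (p - μ * q) := by
  obtain ⟨e, he⟩ := hdμ
  have hd : d = μ ^ 2 + 4 * a ^ 2 * c ^ 2 * e := by linarith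
  subst hd
  have hα2 : α ^ 2 = 1 := by rcases hα with rfl | rfl <;> norm_num
  have hac : (4 : ℤ) * (a * c) ≠ 0 := by
    have : (0 : ℤ) < a * c := mul_pos (by linarith) (by linarith)
    linarith
  constructor
  · rintro ⟨m, hm⟩
    have h2 : (p - μ * q) ^ 2 = (2 * a * c) ^ 2 * (α * m - e * q ^ 2) := by
      linear_combination 2 * α * hm + hpq +
        (2 * μ * p * q - 2 * (μ ^ 2 + 4 * a ^ 2 * c ^ 2 * e) * q ^ 2) * hα2
    exact (Int.pow_dvd_pow_iff two_ne_zero).mp ⟨_, h2⟩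
  · rintro ⟨t, ht⟩
    have hp : p = μ * q + 2 * a * c * t := by linarith
    subst hp
    have hkey : μ * q * t + a * c * t ^ 2 - a * c * e * q ^ 2 = α :=
      mul_left_cancel₀ hac (by linear_combination hpq)
    exact ⟨α * (t ^ 2 + e * q ^ 2), by
      linear_combination (-2 : ℤ) * a * c * α * hkey + (-2 : ℤ) * a * c * hα2⟩
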